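/- In the Erdős–Rényi random graph G(n, 1/2), for any fixed subset S of the vertex set with |S| even, the probability that the set of odd-degree vertices equals exactly S is 2^{1−n}. -/

import Mathlib

open scoped ENNReal

/-- Index type for the potential edges of a simple graph on `Fin n`. -/
abbrev EdgeIdx (n : ℕ) := {p : Fin n × Fin n // p.1 < p.2}

/-- The degree of vertex `u` in the graph described by the edge-indicator `g`. -/
def gDegree (n : ℕ) (g : EdgeIdx n → Bool) (u : Fin n) : ℕ :=
  (Finset.univ.filter fun e : EdgeIdx n => g e = true ∧ (e.1.1 = u ∨ e.1.2 = u)).card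

/-- The set of odd-degree vertices of the graph described by `g`. -/
def oddSet (n : ℕ) (g : EdgeIdx n → Bool) : Finset (Fin n) :=
  Finset.univ.filter fun u => Odd (gDegree n g u)

namespace Stmt3

set_option linter.unusedSectionVars false

variable (n : ℕ) [NeZero n]

/-- Degree mod 2. -/
def phi (g : EdgeIdx n → Bool) (u : Fin n) : ZMod 2 := (gDegree n g u : ZMod 2)

/-- The edge from vertex `0` to vertex `u ≠ 0`. -/
def edge0 (u : Fin n) (hu : u ≠ 0) : EdgeIdx n :=
  ⟨(0, u), show (0 : Fin n) < u from (Fin.pos_iff_ne_zero' u).mpr hu⟩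

/-- Erase all edges touching vertex `0`. -/
def zeroOut (g : EdgeIdx n → Bool) : EdgeIdx n → Bool :=
  fun e => if e.1.1 = 0 then false else g e

lemma snd_ne_zero (e : EdgeIdx n) : e.1.2 ≠ 0 := by
  intro h
  have h2 : e.1.1 < e.1.2 := e.2
  rw [h] at h2
  have h3 : (e.1.1 : ℕ) < (0 : Fin n) := h2
  have h4 : ((0 : Fin n) : ℕ) = 0 := Fin.val_zero n
  omega

lemma zmod2_ite (a : ZMod 2) : (if a = 1 then (1 : ZMod 2) else 0) = a := by
  revert a; decide

lemma zmod2_add (a b : ZMod 2) : b + (b + a) = a := by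
  revert a b; decide

lemma zmod2_add' (a b : ZMod 2) : b + (a + b) = a := by
  revert a b; decide

lemma zmod2_cancel (a b c : ZMod 2) (h : a = b + c) : a + b = c := by
  revert a b c; decide

lemma deg_split (g : EdgeIdx n → Bool) (u : Fin n) (hu : u ≠ 0) :
    gDegree n g u = gDegree n (zeroOut n g) u +
      (if g (edge0 n u hu) then 1 else 0) := by
  classical
  unfold gDegree
  have hsplit := Finset.card_filter_add_card_filter_not
    (s := Finset.univ.filter fun e : EdgeIdx n =>
      g e = true ∧ (e.1.1 = u ∨ e.1.2 = u))
    (p := fun e : EdgeIdx n => e.1.1 = (0 : Fin n))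
  rw [Finset.filter_filter, Finset.filter_filter] at hsplit
  have h1 : (Finset.univ.filter fun e : EdgeIdx n =>
      (g e = true ∧ (e.1.1 = u ∨ e.1.2 = u)) ∧ ¬ e.1.1 = (0 : Fin n)) =
      Finset.univ.filter fun e : EdgeIdx n =>
      zeroOut n g e = true ∧ (e.1.1 = u ∨ e.1.2 = u) := by
    apply Finset.filter_congr
    intro e _
    unfold zeroOut
    by_cases h : e.1.1 = (0 : Fin n) <;> simp [h]
  have h2 : (Finset.univ.filter fun e : EdgeIdx n =>
      (g e = true ∧ (e.1.1 = u ∨ e.1.2 = u)) ∧ e.1.1 = (0 : Fin n)) =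
      if g (edge0 n u hu) then {edge0 n u hu} else ∅ := by
    ext e
    simp only [Finset.mem_filter, Finset.mem_univ, true_and]
    constructor
    · rintro ⟨⟨hge, htouch⟩, h0⟩
      have heu : e.1.2 = u := by
        rcases htouch with h | h
        · exact absurd (h0 ▸ h) (Ne.symm hu)
        · exact h
      have he : e = edge0 n u hu := by
        apply Subtype.ext
        show e.1 = ((0 : Fin n), u)
        rw [← h0, ← heu]
      rw [he] at hge
      simp [hge, he]
    · intro he
      by_cases hg : g (edge0 n u hu) = true
      · simp only [hg, if_true, Finset.mem_singleton] at he
        subst he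
        exact ⟨⟨hg, Or.inr rfl⟩, rfl⟩
      · simp [hg] at he
  rw [h1, h2] at hsplit
  have h3 : (if g (edge0 n u hu) then ({edge0 n u hu} : Finset (EdgeIdx n))
      else ∅).card = if g (edge0 n u hu) then 1 else 0 := by
    by_cases hg : g (edge0 n u hu) = true <;> simp [hg]
  omega

lemma deg_zeroOut_zero (g : EdgeIdx n → Bool) :
    gDegree n (zeroOut n g) 0 = 0 := by
  classical
  unfold gDegree
  rw [Finset.card_eq_zero, Finset.filter_eq_empty_iff]
  rintro e - ⟨hge, htouch⟩
  unfold zeroOut at hge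
  rcases htouch with h | h
  · simp [h] at hge
  · exact snd_ne_zero n e h

lemma handshake (g : EdgeIdx n → Bool) :
    ∑ u : Fin n, phi n g u = 0 := by
  classical
  unfold phi gDegree
  have hcast : ∀ u : Fin n,
      (((Finset.univ.filter fun e : EdgeIdx n =>
        g e = true ∧ (e.1.1 = u ∨ e.1.2 = u)).card : ℕ) : ZMod 2) =
      ∑ e : EdgeIdx n, (if g e = true ∧ (e.1.1 = u ∨ e.1.2 = u)
        then (1 : ZMod 2) else 0) := by
    intro u
    rw [Finset.sum_boole]
  simp only [hcast]
  rw [Finset.sum_comm]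
  apply Finset.sum_eq_zero
  intro e _
  by_cases hg : g e = true
  · simp only [hg, true_and]
    rw [Finset.sum_boole]
    have hfil : (Finset.univ.filter fun u : Fin n => e.1.1 = u ∨ e.1.2 = u) =
        {e.1.1, e.1.2} := by
      ext u
      simp [eq_comm]
    rw [hfil]
    have hcard : ({e.1.1, e.1.2} : Finset (Fin n)).card = 2 := by
      rw [Finset.card_insert_of_notMem (by
        simp only [Finset.mem_singleton]
        exact ne_of_lt e.2), Finset.card_singleton]
    rw [hcard]
    decide
  · simp [hg]

/-- Extend an assignment on the edges not touching `0` by `false` on edges at `0`. -/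
def exth (h : {e : EdgeIdx n // e.1.1 ≠ (0 : Fin n)} → Bool) : EdgeIdx n → Bool :=
  fun e => if he : e.1.1 = (0 : Fin n) then false else h ⟨e, he⟩

/-- The full graph obtained from `h` by choosing the edges at `0` so that the
parity of every vertex `u ≠ 0` is `y u`. -/
def F (y : Fin n → ZMod 2) (h : {e : EdgeIdx n // e.1.1 ≠ (0 : Fin n)} → Bool) :
    EdgeIdx n → Bool :=
  fun e => if e.1.1 = (0 : Fin n) then
    decide (y e.1.2 + phi n (exth n h) e.1.2 = 1) else exth n h e

lemma zeroOut_F (y : Fin n → ZMod 2) (h : {e : EdgeIdx n // e.1.1 ≠ (0 : Fin n)} → Bool) :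
    zeroOut n (F n y h) = exth n h := by
  funext e
  unfold zeroOut F exth
  by_cases he : e.1.1 = (0 : Fin n) <;> simp [he]

lemma zeroOut_eq_exth (g : EdgeIdx n → Bool) :
    zeroOut n g = exth n (fun e => g e.1) := by
  funext e
  unfold zeroOut exth
  by_cases he : e.1.1 = (0 : Fin n) <;> simp [he]

lemma phi_split (g : EdgeIdx n → Bool) (u : Fin n) (hu : u ≠ 0) :
    phi n g u = phi n (zeroOut n g) u +
      (if g (edge0 n u hu) then 1 else 0) := by
  unfold phi
  rw [deg_split n g u hu]
  push_cast
  rfl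

lemma phi_F_ne (y : Fin n → ZMod 2) (h : {e : EdgeIdx n // e.1.1 ≠ (0 : Fin n)} → Bool)
    (u : Fin n) (hu : u ≠ 0) : phi n (F n y h) u = y u := by
  rw [phi_split n (F n y h) u hu, zeroOut_F]
  have hedge : F n y h (edge0 n u hu) =
      decide (y u + phi n (exth n h) u = 1) := by
    unfold F edge0
    simp
  rw [hedge]
  have hh : (if (decide (y u + phi n (exth n h) u = 1)) = true then (1 : ZMod 2) else 0) =
      (if y u + phi n (exth n h) u = 1 then (1 : ZMod 2) else 0) := by
    by_cases hc : y u + phi n (exth n h) u = 1 <;> simp [hc]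
  rw [hh, zmod2_ite]
  exact zmod2_add' _ _

lemma phi_F (y : Fin n → ZMod 2) (hy : ∑ u : Fin n, y u = 0)
    (h : {e : EdgeIdx n // e.1.1 ≠ (0 : Fin n)} → Bool) (u : Fin n) :
    phi n (F n y h) u = y u := by
  classical
  by_cases hu : u = (0 : Fin n)
  swap
  · exact phi_F_ne n y h u hu
  · subst hu
    have h1 := handshake n (F n y h)
    have h2 : ∑ u : Fin n, phi n (F n y h) u =
        phi n (F n y h) 0 + ∑ u ∈ Finset.univ.erase 0, phi n (F n y h) u :=
      (Finset.add_sum_erase _ _ (Finset.mem_univ 0)).symm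
    have h3 : ∑ u : Fin n, y u = y 0 + ∑ u ∈ Finset.univ.erase 0, y u :=
      (Finset.add_sum_erase _ _ (Finset.mem_univ 0)).symm
    have h4 : ∑ u ∈ Finset.univ.erase 0, phi n (F n y h) u =
        ∑ u ∈ Finset.univ.erase 0, y u := by
      apply Finset.sum_congr rfl
      intro u hu'
      exact phi_F_ne n y h u (Finset.mem_erase.mp hu').1
    rw [h2, h4] at h1
    rw [h3] at hy
    have h5 := h1.trans hy.symm
    exact add_right_cancel h5

/-- The fiber of `phi` over an even `y` is in bijection with the assignments on
the edges not touching `0`. -/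
def fiberEquiv (y : Fin n → ZMod 2) (hy : ∑ u : Fin n, y u = 0) :
    {g : EdgeIdx n → Bool // ∀ u, phi n g u = y u} ≃
      ({e : EdgeIdx n // e.1.1 ≠ (0 : Fin n)} → Bool) where
  toFun g e := g.1 e.1
  invFun h := ⟨F n y h, phi_F n y hy h⟩
  left_inv := by
    rintro ⟨g, hg⟩
    apply Subtype.ext
    funext e
    show F n y (fun e' => g e'.1) e = g e
    by_cases he : e.1.1 = (0 : Fin n)
    · unfold F
      rw [if_pos he, ← zeroOut_eq_exth]
      have hu2 : e.1.2 ≠ (0 : Fin n) := snd_ne_zero n e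
      have hsplit := phi_split n g e.1.2 hu2
      rw [hg e.1.2] at hsplit
      have hedge : edge0 n e.1.2 hu2 = e := by
        apply Subtype.ext
        show ((0 : Fin n), e.1.2) = e.1
        rw [← he]
      rw [hedge] at hsplit
      have hkey : y e.1.2 + phi n (zeroOut n g) e.1.2 =
          (if g e then 1 else 0) := zmod2_cancel _ _ _ hsplit
      rw [hkey]
      cases hge : g e <;> simp [hge]
    · unfold F exth
      rw [if_neg he, dif_neg he]
  right_inv := by
    intro h
    funext e
    show F n y h e.1 = h e
    unfold F exth
    rw [if_neg e.2, dif_neg e.2]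

lemma card_fiber (y : Fin n → ZMod 2) (hy : ∑ u : Fin n, y u = 0) :
    Fintype.card {g : EdgeIdx n → Bool // ∀ u, phi n g u = y u} =
      2 ^ (Fintype.card {e : EdgeIdx n // e.1.1 ≠ (0 : Fin n)}) := by
  rw [Fintype.card_congr (fiberEquiv n y hy), Fintype.card_fun, Fintype.card_bool]

lemma card_edges_at_zero :
    Fintype.card {e : EdgeIdx n // e.1.1 = (0 : Fin n)} = n - 1 := by
  have e1 : {e : EdgeIdx n // e.1.1 = (0 : Fin n)} ≃ {u : Fin n // (0 : Fin n) < u} :=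
    { toFun := fun e => ⟨e.1.1.2, by have h := e.1.2; rw [e.2] at h; exact h⟩
      invFun := fun u => ⟨⟨(0, u.1), u.2⟩, rfl⟩
      left_inv := by
        rintro ⟨⟨⟨a, b⟩, hab⟩, h0⟩
        apply Subtype.ext; apply Subtype.ext
        show ((0 : Fin n), b) = (a, b)
        have : a = 0 := h0
        rw [this]
      right_inv := by rintro ⟨u, hu⟩; rfl }
  rw [Fintype.card_congr e1]
  have h2 : Fintype.card {u : Fin n // (0 : Fin n) < u} =
      Fintype.card {u : Fin n // ¬ u = 0} := by
    apply Fintype.card_congr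
    apply Equiv.subtypeEquivRight
    intro u
    rw [Fin.pos_iff_ne_zero']
  rw [h2, Fintype.card_subtype_compl, Fintype.card_subtype_eq, Fintype.card_fin]

lemma card_edges_split :
    Fintype.card (EdgeIdx n) =
      Fintype.card {e : EdgeIdx n // e.1.1 ≠ (0 : Fin n)} + (n - 1) := by
  have h1 := Fintype.card_subtype_compl (fun e : EdgeIdx n => e.1.1 = (0 : Fin n))
  have h2 := Fintype.card_subtype_le (fun e : EdgeIdx n => e.1.1 = (0 : Fin n))
  rw [card_edges_at_zero] at h1 h2
  have h1' : Fintype.card {e : EdgeIdx n // e.1.1 ≠ (0 : Fin n)} =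
      Fintype.card (EdgeIdx n) - (n - 1) := h1
  omega

lemma zmod2_eq_one_iff_odd (m : ℕ) : (m : ZMod 2) = 1 ↔ Odd m := by
  have h : (m : ZMod 2) = ((m % 2 : ℕ) : ZMod 2) := (ZMod.natCast_mod m 2).symm
  rw [h, Nat.odd_iff]
  rcases Nat.mod_two_eq_zero_or_one m with h2 | h2 <;> rw [h2] <;> decide

lemma oddSet_eq_iff (g : EdgeIdx n → Bool) (S : Finset (Fin n)) :
    oddSet n g = S ↔ ∀ u, phi n g u = (if u ∈ S then 1 else 0) := by
  rw [Finset.ext_iff]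
  apply forall_congr'
  intro u
  unfold oddSet phi
  simp only [Finset.mem_filter, Finset.mem_univ, true_and]
  by_cases hu : u ∈ S
  · simp only [hu, if_pos, iff_true]
    exact (zmod2_eq_one_iff_odd (gDegree n g u)).symm
  · simp only [hu, if_neg, iff_false, not_false_eq_true]
    constructor
    · intro hodd
      have h0 : Even (gDegree n g u) := Nat.not_odd_iff_even.mp hodd
      rw [Nat.even_iff] at h0
      rw [← ZMod.natCast_mod (gDegree n g u) 2, h0]
      decide
    · intro h0 hodd
      rw [(zmod2_eq_one_iff_odd (gDegree n g u)).mpr hodd] at h0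
      exact one_ne_zero h0

end Stmt3

/-- For `G ∼ G(n, 1/2)` (the uniform distribution on simple graphs on
`n` labeled vertices) and any fixed even-size subset `S` of the vertices, the
probability that the odd-degree vertex set of `G` equals `S` is `2^{1−n}`. -/
theorem stmt_3 (n : ℕ) (hn : 1 ≤ n) (S : Finset (Fin n)) (hS : Even S.card) :
    (PMF.uniformOfFintype (EdgeIdx n → Bool)).toOuterMeasure
        {g | oddSet n g = S} = (1 / 2 : ℝ≥0∞) ^ (n - 1) := by
  classical
  haveI : NeZero n := ⟨by omega⟩
  set y : Fin n → ZMod 2 := fun u => if u ∈ S then 1 else 0 with hy_def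
  have hy : ∑ u : Fin n, y u = 0 := by
    rw [hy_def]
    rw [Finset.sum_boole]
    have : (Finset.univ.filter fun u : Fin n => u ∈ S) = S := by
      ext u; simp
    rw [this, ZMod.natCast_eq_zero_iff]
    exact hS.two_dvd
  have hset : {g : EdgeIdx n → Bool | oddSet n g = S} =
      {g : EdgeIdx n → Bool | ∀ u, Stmt3.phi n g u = y u} := by
    ext g
    exact Stmt3.oddSet_eq_iff n g S
  rw [hset, PMF.toOuterMeasure_uniformOfFintype_apply]
  have hcard1 : ∀ inst : Fintype ↥{g : EdgeIdx n → Bool | ∀ u, Stmt3.phi n g u = y u},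
      @Fintype.card _ inst =
      2 ^ (Fintype.card {e : EdgeIdx n // e.1.1 ≠ (0 : Fin n)}) := by
    intro inst
    rw [← Stmt3.card_fiber n y hy]
    exact Fintype.card_congr (Equiv.refl _)
  have hcard2 : Fintype.card (EdgeIdx n → Bool) =
      2 ^ (Fintype.card {e : EdgeIdx n // e.1.1 ≠ (0 : Fin n)} + (n - 1)) := by
    rw [← Stmt3.card_edges_split, Fintype.card_fun, Fintype.card_bool]
  rw [hcard1 _, hcard2]
  set m := Fintype.card {e : EdgeIdx n // e.1.1 ≠ (0 : Fin n)}
  push_cast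
  have h0 : ((2 : ℝ≥0∞) ^ m) ≠ 0 := by positivity
  have ht : ((2 : ℝ≥0∞) ^ m) ≠ ⊤ := by simp
  rw [pow_add, one_div, ← ENNReal.inv_pow, div_eq_mul_inv,
    ENNReal.mul_inv (Or.inl h0) (Or.inl ht), ← mul_assoc,
    ENNReal.mul_inv_cancel h0 ht, one_mul]
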